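/- Let p be prime and let L be a finite-dimensional vector space over 𝔽_p equipped with a symplectic self-duality ∇ (an isomorphism L → Hom(L, ℚ/ℤ) with ∇(x)(x)=0 for all x). Then (L, ∇) is standard: there is a finite abelian group A and an isomorphism φ : A × dual(A) → L carrying the standard symplectic self-duality ∇⁰(x,χ)(y,λ) = χ(y) − λ(x) to ∇. -/

import Mathlib

/-- ℚ/ℤ, the dualizing object for finite abelian groups. -/
abbrev QZ : Type := AddCircle (1 : ℚ)

/-- `(L, ∇)` is isomorphic, as a group with symplectic self-duality, to
`A × dual A` with the standard symplectic self-duality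
`∇⁰(x,χ)(y,λ) = χ(y) − λ(x)`. -/
def StandardPair (A L : Type) [AddCommGroup A] [AddCommGroup L]
    (nabla : L ≃+ (L →+ QZ)) : Prop :=
  ∃ φ : (A × (A →+ QZ)) ≃+ L,
    ∀ a b : A × (A →+ QZ), nabla (φ a) (φ b) = a.2 b.1 - b.2 a.1

set_option linter.unusedSectionVars false

section e
variable (p : ℕ) [NeZero p]

noncomputable def uQZ : QZ := (((p : ℚ)⁻¹ : ℚ) : QZ)

lemma zsmul_u (k : ℤ) : k • uQZ p = ((k * (p : ℚ)⁻¹ : ℚ) : QZ) := by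
  rw [uQZ, ← AddCircle.coe_zsmul]; norm_num

lemma p_smul_u : (p : ℤ) • uQZ p = 0 := by
  rw [zsmul_u, AddCircle.coe_eq_zero_iff]
  exact ⟨1, by push_cast; field_simp; simp [NeZero.ne p]⟩

/-- The embedding of `ZMod p` into `ℚ/ℤ` as the `p`-torsion. -/
noncomputable def eQZ : ZMod p →+ QZ := ZMod.lift p ⟨zmultiplesHom QZ (uQZ p), p_smul_u p⟩

lemma eQZ_intCast (k : ℤ) : eQZ p (k : ZMod p) = k • uQZ p := ZMod.lift_coe ..

lemma eQZ_inj : Function.Injective (eQZ p) := by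
  rw [injective_iff_map_eq_zero]
  intro a ha
  obtain ⟨k, rfl⟩ := ZMod.intCast_surjective a
  rw [eQZ_intCast, zsmul_u, AddCircle.coe_eq_zero_iff] at ha
  obtain ⟨n, hn⟩ := ha
  have hp : (p : ℚ) ≠ 0 := Nat.cast_ne_zero.mpr (NeZero.ne p)
  have : (k : ℚ) = n * p := by field_simp at hn; simp only [zsmul_eq_mul, mul_one] at hn; linarith [hn]
  have : k = n * p := by exact_mod_cast this
  simp [this, ZMod.intCast_zmod_eq_zero_iff_dvd]

lemma eQZ_surj_torsion (z : QZ) (hz : p • z = 0) : ∃ a : ZMod p, eQZ p a = z := by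
  induction z using QuotientAddGroup.induction_on with
  | H q =>
    have hq : ((p • q : ℚ) : QZ) = 0 := by
      rw [← hz, ← AddCircle.coe_nsmul]
    rw [AddCircle.coe_eq_zero_iff] at hq
    obtain ⟨n, hn⟩ := hq
    refine ⟨(n : ZMod p), ?_⟩
    rw [eQZ_intCast, zsmul_u]
    congr 1
    have hp : (p : ℚ) ≠ 0 := Nat.cast_ne_zero.mpr (NeZero.ne p)
    field_simp
    simp only [zsmul_eq_mul, mul_one, nsmul_eq_mul] at hn
    linarith [hn]
end e

open Module Finset in
lemma symp_aux {K : Type} [Field K] (d : ℕ) :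
    ∀ (V : Type) [AddCommGroup V] [Module K V] [FiniteDimensional K V],
    finrank K V = d → ∀ (B : V →ₗ[K] V →ₗ[K] K),
    (∀ x, B x x = 0) → (∀ x, (∀ y, B x y = 0) → x = 0) →
    ∃ (n : ℕ) (f : ((Fin n → K) × (Fin n → K)) ≃+ V),
      ∀ a b, B (f a) (f b) =
        (∑ i, a.2 i * b.1 i) - (∑ i, b.2 i * a.1 i) := by
  induction d using Nat.strong_induction_on with
  | _ d IH =>
  intro V _ _ _ hd B alt nondeg
  have skew : ∀ u v : V, B u v = - B v u := by
    intro u v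
    have h := alt (u + v)
    simp only [map_add, LinearMap.add_apply, alt u, alt v] at h
    linear_combination h
  by_cases hV : ∀ x : V, x = 0
  · refine ⟨0, ⟨⟨fun _ => 0, fun _ => ((fun _ => 0), (fun _ => 0)), ?_, ?_⟩, ?_⟩, ?_⟩
    · intro a; ext i <;> exact absurd i.2 (by simp)
    · intro v; exact (hV v).symm
    · intro a b; simp
    · intro a b; simp
  · push_neg at hV
    obtain ⟨x, hx⟩ := hV
    have : ∃ y0, B x y0 ≠ 0 := by
      by_contra h; push_neg at h; exact hx (nondeg x h)
    obtain ⟨y0, hy0⟩ := this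
    set y : V := (B x y0)⁻¹ • y0 with hy
    have hxy : B x y = 1 := by
      rw [hy, map_smul, smul_eq_mul, inv_mul_cancel₀ hy0]
    have hyx : B y x = -1 := by rw [skew, hxy]
    set W : Submodule K V := LinearMap.ker (B x) ⊓ LinearMap.ker (B y) with hWdef
    have memW : ∀ z : V, z ∈ W ↔ B x z = 0 ∧ B y z = 0 := by
      intro z; simp [hWdef, LinearMap.mem_ker]
    let g : ((K × K) × W) →ₗ[K] V :=
      { toFun := fun q => q.1.2 • x + q.1.1 • y + (q.2 : V)
        map_add' := by
          intro a b
          simp only [Prod.fst_add, Prod.snd_add, Submodule.coe_add, add_smul]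
          abel
        map_smul' := by
          intro c a
          simp only [Prod.smul_fst, Prod.smul_snd, Submodule.coe_smul, smul_eq_mul,
            RingHom.id_apply, smul_add, mul_smul]
        }
    have gval : ∀ q : (K × K) × W, g q = q.1.2 • x + q.1.1 • y + (q.2 : V) := fun _ => rfl
    have evx : ∀ q : (K × K) × W, B x (g q) = q.1.1 := by
      intro q
      have := ((memW q.2).mp q.2.2).1
      simp [gval, map_add, map_smul, alt, hxy, this]
    have evy : ∀ q : (K × K) × W, B y (g q) = -q.1.2 := by
      intro q
      have := ((memW q.2).mp q.2.2).2
      simp [gval, map_add, map_smul, alt, hyx, this]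
    have ginj : Function.Injective g := by
      intro q q' h
      have h0 : g (q - q') = 0 := by rw [map_sub, h, sub_self]
      have h1 : q.1.1 - q'.1.1 = 0 := by
        have := evx (q - q'); rw [h0] at this; simpa using this.symm
      have h2 : q.1.2 - q'.1.2 = 0 := by
        have h' := evy (q - q'); rw [h0, map_zero] at h'
        have e : (q - q').1.2 = q.1.2 - q'.1.2 := rfl
        rw [e] at h'
        linear_combination h'
      have h3 : ((q - q').2 : V) = 0 := by
        have := gval (q - q')
        rw [h0] at this
        have e1 : (q - q').1.2 = 0 := h2
        have e2 : (q - q').1.1 = 0 := h1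
        rw [e1, e2] at this
        simpa using this.symm
      have hq1 : q.1 = q'.1 := Prod.ext (by linear_combination h1) (by linear_combination h2)
      have hq2 : q.2 = q'.2 := Subtype.ext (by
        have e : ((q - q').2 : V) = (q.2 : V) - (q'.2 : V) := rfl
        rw [e] at h3
        exact sub_eq_zero.mp h3)
      exact Prod.ext hq1 hq2
    have gsurj : Function.Surjective g := by
      intro v
      refine ⟨((B x v, -(B y v)), ⟨v - (-(B y v)) • x - (B x v) • y, ?_⟩), ?_⟩
      · rw [memW]
        constructor
        · simp [map_sub, map_smul, alt, hxy]
        · simp [map_sub, map_smul, alt, hyx]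
      · rw [gval]; simp only; abel
    let geq : ((K × K) × W) ≃ₗ[K] V := LinearEquiv.ofBijective g ⟨ginj, gsurj⟩
    have hrank : Module.finrank K W + 2 = d := by
      have h1 := geq.finrank_eq
      rw [Module.finrank_prod, Module.finrank_prod, Module.finrank_self, hd] at h1
      omega
    let Bw : W →ₗ[K] W →ₗ[K] K := B.compl₁₂ W.subtype W.subtype
    have Bwval : ∀ w w' : W, Bw w w' = B (w : V) (w' : V) := fun _ _ => rfl
    have altW : ∀ w : W, Bw w w = 0 := fun w => alt w
    have nondegW : ∀ w : W, (∀ w' : W, Bw w w' = 0) → w = 0 := by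
      intro w hw
      have hwx : B (w : V) x = 0 := by
        rw [skew]; rw [((memW w).mp w.2).1]; ring
      have hwy : B (w : V) y = 0 := by
        rw [skew]; rw [((memW w).mp w.2).2]; ring
      have : ∀ v : V, B (w : V) v = 0 := by
        intro v
        obtain ⟨q, rfl⟩ := gsurj v
        rw [gval, map_add, map_add, map_smul, map_smul, hwx, hwy]
        have := hw q.2
        rw [Bwval] at this
        simp [this]
      exact Subtype.ext (nondeg _ this)
    obtain ⟨n, f', hf'⟩ := IH (Module.finrank K W) (by omega) W rfl Bw altW nondegW
    let E : ((Fin (n+1) → K) × (Fin (n+1) → K)) ≃+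
        ((K × K) × ((Fin n → K) × (Fin n → K))) :=
      { toFun := fun a => ((a.1 0, a.2 0), (fun i => a.1 i.succ, fun i => a.2 i.succ))
        invFun := fun q => (Fin.cons q.1.1 q.2.1, Fin.cons q.1.2 q.2.2)
        left_inv := by
          intro a
          refine Prod.ext ?_ ?_ <;> · funext i; exact Fin.cases rfl (fun j => rfl) i
        right_inv := by intro q; rfl
        map_add' := fun _ _ => rfl }
    refine ⟨n + 1, E.trans (((AddEquiv.refl (K × K)).prodCongr f').trans geq.toAddEquiv), ?_⟩
    intro a b
    have ta : (Fin n → K) × (Fin n → K) := ((fun i => a.1 i.succ), (fun i => a.2 i.succ))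
    have fval : ∀ c : (Fin (n+1) → K) × (Fin (n+1) → K),
        ((E.trans (((AddEquiv.refl (K × K)).prodCongr f').trans geq.toAddEquiv)) c : V)
        = (c.2 0) • x + (c.1 0) • y
          + ((f' ((fun i => c.1 i.succ), (fun i => c.2 i.succ))) : V) := by
      intro c; rfl
    rw [fval a, fval b]
    clear ta
    set wa : W := f' ((fun i => a.1 i.succ), (fun i => a.2 i.succ)) with hwa
    set wb : W := f' ((fun i => b.1 i.succ), (fun i => b.2 i.succ)) with hwb
    have hx1 : B x (wb : V) = 0 := ((memW _).mp wb.2).1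
    have hy1 : B y (wb : V) = 0 := ((memW _).mp wb.2).2
    have hw1 : B (wa : V) x = 0 := by
      rw [skew, ((memW _).mp wa.2).1]; ring
    have hw2 : B (wa : V) y = 0 := by
      rw [skew, ((memW _).mp wa.2).2]; ring
    have hww : B (wa : V) (wb : V)
        = (∑ i : Fin n, a.2 i.succ * b.1 i.succ) - (∑ i : Fin n, b.2 i.succ * a.1 i.succ) := by
      rw [← Bwval, hwa, hwb]
      exact hf' _ _
    simp only [map_add, map_smul, LinearMap.add_apply, LinearMap.smul_apply, smul_eq_mul,
      alt, hxy, hyx, hx1, hy1, hw1, hw2, hww]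
    rw [Fin.sum_univ_succ, Fin.sum_univ_succ]
    ring

/-- Every symplectic self-duality of a finite-dimensional 𝔽_p-vector space (i.e. a
finite abelian group of exponent `p`) is standard. -/
theorem statement6 (p : ℕ) (hp : p.Prime) (L : Type) [AddCommGroup L] [Fintype L]
    (hexp : ∀ x : L, p • x = 0)
    (nabla : L ≃+ (L →+ QZ)) (hsymp : ∀ x : L, nabla x x = 0) :
    ∃ (A : Type) (iA : AddCommGroup A) (_ : @Finite A),
      @StandardPair A L iA _ nabla := by
  haveI : Fact p.Prime := ⟨hp⟩
  haveI : NeZero p := ⟨hp.pos.ne'⟩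
  letI inst : Module (ZMod p) L := AddCommGroup.zmodModule hexp
  clear_value inst
  set e := eQZ p with he
  have einj : Function.Injective e := eQZ_inj p
  -- the pairing is p-torsion valued
  have tors : ∀ x y : L, p • (nabla x y) = 0 := by
    intro x y
    have h1 : nabla (p • x) y = p • (nabla x y) := by rw [map_nsmul]; rfl
    rw [← h1, hexp x, map_zero]
    rfl
  have hb : ∀ x y : L, ∃ a : ZMod p, e a = nabla x y :=
    fun x y => eQZ_surj_torsion p _ (tors x y)
  set b : L → L → ZMod p := fun x y => (hb x y).choose with hbdef
  have heB : ∀ x y : L, e (b x y) = nabla x y := fun x y => (hb x y).choose_spec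
  have bsmul_nat : ∀ (m : ℕ) (x y : L), b (m • x) y = m • b x y := by
    intro m x y
    apply einj
    calc e (b (m • x) y) = nabla (m • x) y := heB _ _
    _ = (m • nabla x) y := by rw [map_nsmul]
    _ = m • (nabla x y) := rfl
    _ = m • e (b x y) := by rw [heB]
    _ = e (m • b x y) := (map_nsmul e m _).symm
  have bsmul : ∀ (k : ZMod p) (x y : L), b (k • x) y = k * b x y := by
    intro k x y
    have h1 : k • x = k.val • x := by
      rw [← Nat.cast_smul_eq_nsmul (ZMod p) k.val x, ZMod.natCast_val, ZMod.cast_id]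
    rw [h1, bsmul_nat, nsmul_eq_mul, ZMod.natCast_val, ZMod.cast_id]
  have badd : ∀ x x' y : L, b (x + x') y = b x y + b x' y := by
    intro x x' y
    apply einj
    calc e (b (x + x') y) = nabla (x + x') y := heB _ _
    _ = nabla x y + nabla x' y := by rw [map_add]; rfl
    _ = e (b x y) + e (b x' y) := by rw [heB, heB]
    _ = e (b x y + b x' y) := (map_add e _ _).symm
  have badd2 : ∀ x y y' : L, b x (y + y') = b x y + b x y' := by
    intro x y y'
    apply einj
    calc e (b x (y + y')) = nabla x (y + y') := heB _ _
    _ = nabla x y + nabla x y' := map_add _ _ _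
    _ = e (b x y) + e (b x y') := by rw [heB, heB]
    _ = e (b x y + b x y') := (map_add e _ _).symm
  have bsmul2_nat : ∀ (m : ℕ) (x y : L), b x (m • y) = m • b x y := by
    intro m x y
    apply einj
    calc e (b x (m • y)) = nabla x (m • y) := heB _ _
    _ = m • (nabla x y) := map_nsmul _ m _
    _ = m • e (b x y) := by rw [heB]
    _ = e (m • b x y) := (map_nsmul e m _).symm
  have bsmul2 : ∀ (k : ZMod p) (x y : L), b x (k • y) = k * b x y := by
    intro k x y
    have h1 : k • y = k.val • y := by
      rw [← Nat.cast_smul_eq_nsmul (ZMod p) k.val y, ZMod.natCast_val, ZMod.cast_id]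
    rw [h1, bsmul2_nat, nsmul_eq_mul, ZMod.natCast_val, ZMod.cast_id]
  have H2 : ∀ (k : ZMod p) (x y : L), b (k • x) y = k • b x y := by
    intro k x y; rw [bsmul, smul_eq_mul]
  have H4 : ∀ (k : ZMod p) (x y : L), b x (k • y) = k • b x y := by
    intro k x y; rw [bsmul2, smul_eq_mul]
  set B : L →ₗ[ZMod p] L →ₗ[ZMod p] ZMod p :=
    LinearMap.mk₂ (ZMod p) b badd (fun k x y => H2 k x y) badd2 (fun k x y => H4 k x y)
    with hBdef
  have Bval : ∀ x y : L, B x y = b x y := fun _ _ => rfl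
  have alt : ∀ x : L, B x x = 0 := by
    intro x
    apply einj
    rw [Bval, heB, hsymp, map_zero]
  have nondeg : ∀ x : L, (∀ y : L, B x y = 0) → x = 0 := by
    intro x hx
    have hnx : nabla x = 0 := by
      ext y
      have h1 := hx y
      rw [Bval] at h1
      have h2 := heB x y
      rw [h1, map_zero] at h2
      exact h2.symm
    have h0 : nabla x = nabla 0 := by rw [hnx, map_zero]
    exact nabla.injective h0
  obtain ⟨n, f, hf⟩ := symp_aux (Module.finrank (ZMod p) L) L rfl B alt nondeg
  refine ⟨Fin n → ZMod p, inferInstance, inferInstance, ?_⟩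
  have psmulA : ∀ v : Fin n → ZMod p, p • v = 0 := by
    intro v; funext i
    show p • v i = 0
    rw [nsmul_eq_mul, ZMod.natCast_self, zero_mul]
  set dot : (Fin n → ZMod p) → ((Fin n → ZMod p) →+ ZMod p) := fun c =>
    { toFun := fun a => ∑ j, c j * a j
      map_zero' := by simp
      map_add' := by intro a a'; simp [mul_add, Finset.sum_add_distrib] } with hdot
  set dA : (Fin n → ZMod p) →+ ((Fin n → ZMod p) →+ QZ) :=
    { toFun := fun c => e.comp (dot c)
      map_zero' := by
        refine AddMonoidHom.ext fun a => ?_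
        simp [hdot]
      map_add' := by
        intro c c'
        refine AddMonoidHom.ext fun a => ?_
        simp [hdot, add_mul, Finset.sum_add_distrib] } with hdA
  have dAval : ∀ c a : Fin n → ZMod p, dA c a = e (∑ j, c j * a j) := fun _ _ => rfl
  have dAinj : Function.Injective dA := by
    intro c c' h
    funext j
    have h1 : dA c (Pi.single j 1) = dA c' (Pi.single j 1) := by rw [h]
    rw [dAval, dAval] at h1
    have h2 := einj h1
    simpa [Pi.single_apply, mul_ite, mul_one, mul_zero, Finset.sum_ite_eq'] using h2
  have dAsurj : Function.Surjective dA := by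
    intro χ
    have hc : ∀ j : Fin n, ∃ a : ZMod p, e a = χ (Pi.single j 1) := by
      intro j
      apply eQZ_surj_torsion
      have h0 : p • (Pi.single j (1 : ZMod p) : Fin n → ZMod p) = 0 := psmulA _
      rw [← map_nsmul χ p, h0, map_zero]
    refine ⟨fun j => (hc j).choose, AddMonoidHom.ext fun a => ?_⟩
    have step : ∀ j : Fin n, χ (Pi.single j (a j)) = e ((hc j).choose * a j) := by
      intro j
      have h1 : (Pi.single j (a j) : Fin n → ZMod p)
          = (a j).val • (Pi.single j (1 : ZMod p) : Fin n → ZMod p) := by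
        funext i
        by_cases hij : i = j
        · subst hij
          simp [Pi.single_apply, nsmul_eq_mul, ZMod.natCast_val, ZMod.cast_id]
        · simp [Pi.single_apply, hij]
      rw [h1, map_nsmul]
      have h2 : e ((hc j).choose * a j) = (a j).val • e ((hc j).choose) := by
        rw [← map_nsmul]
        congr 1
        rw [nsmul_eq_mul, ZMod.natCast_val, ZMod.cast_id, mul_comm]
      rw [h2, (hc j).choose_spec]
    rw [dAval]
    calc e (∑ j, (fun j => (hc j).choose) j * a j)
        = ∑ j, e ((hc j).choose * a j) := map_sum e _ _
      _ = ∑ j, χ (Pi.single j (a j)) :=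
          Finset.sum_congr rfl (fun j _ => (step j).symm)
      _ = χ (∑ j, Pi.single j (a j)) := (map_sum χ _ _).symm
      _ = χ a := by rw [Finset.univ_sum_single]
  set D : (Fin n → ZMod p) ≃+ ((Fin n → ZMod p) →+ QZ) :=
    AddEquiv.ofBijective dA ⟨dAinj, dAsurj⟩ with hD
  have Dprop : ∀ (χ : (Fin n → ZMod p) →+ QZ) (a : Fin n → ZMod p),
      χ a = e (∑ j, (D.symm χ) j * a j) := by
    intro χ a
    rw [← dAval]
    have h1 : dA (D.symm χ) = D (D.symm χ) := rfl
    rw [h1, D.apply_symm_apply]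
  refine ⟨((AddEquiv.refl (Fin n → ZMod p)).prodCongr D.symm).trans f, ?_⟩
  intro a c
  have key : ∀ u v : L, nabla u v = e (B u v) := fun u v => (heB u v).symm
  have hφ : ∀ z : (Fin n → ZMod p) × ((Fin n → ZMod p) →+ QZ),
      (((AddEquiv.refl (Fin n → ZMod p)).prodCongr D.symm).trans f) z
        = f (z.1, D.symm z.2) := fun _ => rfl
  rw [hφ a, hφ c, key, hf]
  dsimp only
  rw [map_sub, ← Dprop a.2 c.1, ← Dprop c.2 a.1]
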